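/- The isoperimetric spectrum is monotone: ι_n ≤ ι_{n+1}, where ι_k is the minimum over families of k pairwise disjoint nonempty subsets {Q_i} of V of (1/k)∑_i ∂(Q_i)/π(Q_i). -/
import Mathlib


open Finset

/-- Outgoing boundary flow `∂(Q) = ∑_{u∈Q, v∉Q} K(u,v)π(u)`. -/
noncomputable def dpart {V : Type*} [Fintype V] [DecidableEq V]
    (K : V → V → ℝ) (π : V → ℝ) (Q : Finset V) : ℝ :=
  ∑ u ∈ Q, ∑ v ∈ Qᶜ, K u v * π u

/-- `π(Q) = ∑_{u∈Q} π(u)`. -/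
noncomputable def pim {V : Type*} (π : V → ℝ) (Q : Finset V) : ℝ :=
  ∑ u ∈ Q, π u

/-- The `n`-th isoperimetric constant: minimum of the mean normalized boundary over
families of `n` pairwise disjoint nonempty subsets of `V`. -/
noncomputable def iotaD {V : Type*} [Fintype V] [DecidableEq V]
    (K : V → V → ℝ) (π : V → ℝ) (n : ℕ) : ℝ :=
  sInf {x : ℝ | ∃ Q : Fin n → Finset V, (∀ i, (Q i).Nonempty) ∧
    Pairwise (Function.onFun Disjoint Q) ∧
    x = (∑ i, dpart K π (Q i) / pim π (Q i)) / n}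

/-- The `n`-th partition isoperimetric constant: minimum of the mean normalized boundary
over partitions of `V` into `n` nonempty parts. -/
noncomputable def iotaP {V : Type*} [Fintype V] [DecidableEq V]
    (K : V → V → ℝ) (π : V → ℝ) (n : ℕ) : ℝ :=
  sInf {x : ℝ | ∃ Q : Fin n → Finset V, (∀ i, (Q i).Nonempty) ∧
    Pairwise (Function.onFun Disjoint Q) ∧
    Finset.univ.biUnion Q = Finset.univ ∧
    x = (∑ i, dpart K π (Q i) / pim π (Q i)) / n}

theorem iotaD_monotone {V : Type*} [Fintype V] [DecidableEq V]
    (K : V → V → ℝ) (π : V → ℝ)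
    (hK0 : ∀ u v, 0 ≤ K u v) (hK1 : ∀ u, ∑ v, K u v = 1)
    (hπ : ∀ u, 0 < π u) (hπ1 : ∑ u, π u = 1)
    (hstat : ∀ v, ∑ u, π u * K u v = π v)
    (n : ℕ) (hn : 0 < n) (hcard : n + 1 ≤ Fintype.card V) :
    iotaD K π n ≤ iotaD K π (n + 1) := by
  classical
  have hratio : ∀ Q : Finset V, 0 ≤ dpart K π Q / pim π Q := by
    intro Q
    apply div_nonneg
    · exact Finset.sum_nonneg fun u _ => Finset.sum_nonneg fun v _ =>
        mul_nonneg (hK0 u v) (hπ u).le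
    · exact Finset.sum_nonneg fun u _ => (hπ u).le
  have hbdd : BddBelow {x : ℝ | ∃ Q : Fin n → Finset V, (∀ i, (Q i).Nonempty) ∧
      Pairwise (Function.onFun Disjoint Q) ∧
      x = (∑ i, dpart K π (Q i) / pim π (Q i)) / n} := by
    refine ⟨0, ?_⟩
    rintro x ⟨Q, hne, _, rfl⟩
    exact div_nonneg (Finset.sum_nonneg fun i _ => hratio _) (Nat.cast_nonneg n)
  obtain ⟨e⟩ : Nonempty (Fin (n + 1) ↪ V) := by
    rw [← Fintype.card_fin (n + 1)] at hcard
    exact Function.Embedding.nonempty_of_card_le hcard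
  apply le_csInf
  · refine ⟨_, fun i : Fin (n + 1) => ({e i} : Finset V), fun i => Finset.singleton_nonempty _,
      ?_, rfl⟩
    intro i j hij
    simp only [Function.onFun, Finset.disjoint_singleton]
    exact fun h => hij (e.injective h)
  rintro x ⟨Q, hne, hdisj, rfl⟩
  set r : Fin (n + 1) → ℝ := fun i => dpart K π (Q i) / pim π (Q i) with hr
  obtain ⟨i₀, -, hmax⟩ := Finset.exists_max_image (Finset.univ : Finset (Fin (n + 1))) r
    Finset.univ_nonempty
  have hmem : (∑ j : Fin n, r (i₀.succAbove j)) / n ∈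
      {x : ℝ | ∃ Q : Fin n → Finset V, (∀ i, (Q i).Nonempty) ∧
      Pairwise (Function.onFun Disjoint Q) ∧
      x = (∑ i, dpart K π (Q i) / pim π (Q i)) / n} := by
    refine ⟨fun j => Q (i₀.succAbove j), fun j => hne _, ?_, rfl⟩
    intro i j hij
    exact hdisj (fun h => hij (Fin.succAbove_right_injective h))
  refine le_trans (csInf_le hbdd hmem) ?_
  have hsplit : (∑ i, r i) = r i₀ + ∑ j : Fin n, r (i₀.succAbove j) :=
    Fin.sum_univ_succAbove r i₀
  set T : ℝ := ∑ j : Fin n, r (i₀.succAbove j) with hT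
  have hTle : T ≤ (n : ℝ) * r i₀ := by
    calc T ≤ ∑ _j : Fin n, r i₀ :=
          Finset.sum_le_sum fun j _ => hmax _ (Finset.mem_univ _)
      _ = (n : ℝ) * r i₀ := by simp [mul_comm]
  rw [div_le_div_iff₀ (by exact_mod_cast hn) (by positivity)]
  rw [hsplit]
  push_cast
  nlinarith [hTle]
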